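/- Let τ = k₁T₁ + k₂T₂ with k₁,k₂ > 0, k₁+k₂=1, where T₁,T₂ are the first two jump times of a Poisson process with intensity λ. Then Z̃_τ = Z_τ = e^{-λk₁(T₂-T₁)} < 1 almost surely, and τ avoids F-stopping times; in particular τ is not an honest time. -/

import Mathlib

open MeasureTheory ProbabilityTheory
open scoped ENNReal

namespace NHAux

lemma expMeasure_singleton {r : ℝ} (a : ℝ) : expMeasure r {a} = 0 := by
  rw [expMeasure, gammaMeasure]
  exact withDensity_absolutelyContinuous _ _ (measure_singleton a)

lemma expMeasure_Iic' {r : ℝ} (hr : 0 < r) (x : ℝ) :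
    expMeasure r (Set.Iic x) =
      ENNReal.ofReal (if 0 ≤ x then 1 - Real.exp (-(r * x)) else 0) := by
  haveI := isProbabilityMeasure_expMeasure hr
  rw [← ofReal_cdf, cdf_expMeasure_eq hr]

lemma expMeasure_Ioi {r : ℝ} (hr : 0 < r) (x : ℝ) :
    expMeasure r (Set.Ioi x) = ENNReal.ofReal (Real.exp (-(r * max x 0))) := by
  haveI := isProbabilityMeasure_expMeasure hr
  have h1 : Set.Ioi x = (Set.Iic x)ᶜ := (Set.compl_Iic).symm
  rw [h1, measure_compl measurableSet_Iic (measure_ne_top _ _), measure_univ,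
    expMeasure_Iic' hr]
  rcases le_or_gt 0 x with h | h
  · rw [if_pos h, max_eq_left h, ← ENNReal.ofReal_one,
      ← ENNReal.ofReal_sub _ (by
        have h2 : Real.exp (-(r * x)) ≤ 1 := Real.exp_le_one_iff.2 (by nlinarith)
        linarith)]
    congr 1
    ring
  · rw [if_neg (not_le.2 h), max_eq_right h.le, ENNReal.ofReal_zero, tsub_zero, mul_zero,
      neg_zero, Real.exp_zero, ENNReal.ofReal_one]

lemma graph_null {Ω : Type*} [MeasurableSpace Ω] (μ : Measure Ω) [IsProbabilityMeasure μ]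
    {lam : ℝ} (hlam : 0 < lam) (X Y : Ω → ℝ) (hX : Measurable X) (hY : Measurable Y)
    (hdY : Measure.map Y μ = expMeasure lam) (hind : IndepFun X Y μ)
    (h : ℝ → ℝ) (hh : Measurable h) : μ {ω | Y ω = h (X ω)} = 0 := by
  haveI := isProbabilityMeasure_expMeasure hlam
  have hmap := (indepFun_iff_map_prod_eq_prod_map_map hX.aemeasurable hY.aemeasurable).mp hind
  have hs : MeasurableSet {p : ℝ × ℝ | p.2 = h p.1} :=
    measurableSet_eq_fun measurable_snd (hh.comp measurable_fst)
  have h0 : μ {ω | Y ω = h (X ω)} =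
      Measure.map (fun ω => (X ω, Y ω)) μ {p : ℝ × ℝ | p.2 = h p.1} := by
    rw [Measure.map_apply (hX.prodMk hY) hs]
    rfl
  rw [h0, hmap]
  haveI : SFinite (Measure.map Y μ) := by rw [hdY]; infer_instance
  rw [Measure.prod_apply hs]
  have hz : ∀ x : ℝ, (Measure.map Y μ) (Prod.mk x ⁻¹' {p : ℝ × ℝ | p.2 = h p.1}) = 0 := by
    intro x
    have : Prod.mk x ⁻¹' {p : ℝ × ℝ | p.2 = h p.1} = {h x} := by ext y; simp
    rw [this, hdY, expMeasure_singleton]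
  have hz2 : ∀ x : ℝ, (Measure.map Y μ) {h x} = 0 := fun x => by
    rw [hdY, expMeasure_singleton]
  simp [hz2]

lemma exists_g (D : ℚ → Set ℝ) (hD : ∀ q, MeasurableSet (D q)) :
    ∃ g : ℝ → ℝ, Measurable g ∧
      ∀ (x : ℝ) (r : ℝ), (∀ q : ℚ, x ∈ D q ↔ r ≤ (q : ℝ)) → g x = r := by
  classical
  set G : ℝ → ℝ≥0∞ := fun x => ⨅ q : ℚ, (if x ∈ D q then ENNReal.ofReal (Real.exp q) else ⊤)
    with hG
  have hGm : Measurable G :=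
    Measurable.iInf fun q => Measurable.ite (hD q) measurable_const measurable_const
  refine ⟨fun x => Real.log (G x).toReal,
    Real.measurable_log.comp (ENNReal.measurable_toReal.comp hGm), ?_⟩
  intro x r hx
  have hGx : G x = ENNReal.ofReal (Real.exp r) := by
    apply le_antisymm
    · have hseq : ∀ n : ℕ, ∃ q : ℚ, r ≤ (q : ℝ) ∧ (q : ℝ) < r + 1 / (n + 1) := by
        intro n
        have hlt : r < r + 1 / (n + 1 : ℝ) := by
          have : (0:ℝ) < 1 / (n + 1 : ℝ) := by positivity
          linarith
        obtain ⟨q, hq1, hq2⟩ := exists_rat_btwn hlt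
        exact ⟨q, hq1.le, hq2⟩
      choose q hq1 hq2 using hseq
      have hqt : Filter.Tendsto (fun n => ((q n : ℝ))) Filter.atTop (nhds r) := by
        have h1 : Filter.Tendsto (fun n : ℕ => r + 1 / (n + 1 : ℝ)) Filter.atTop (nhds r) := by
          have := tendsto_one_div_add_atTop_nhds_zero_nat (𝕜 := ℝ)
          have h2 := Filter.Tendsto.const_add r this
          simpa using h2
        exact tendsto_of_tendsto_of_tendsto_of_le_of_le tendsto_const_nhds h1 hq1
          (fun n => (hq2 n).le)
      have hle : ∀ n, G x ≤ ENNReal.ofReal (Real.exp (q n)) := by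
        intro n
        have hmem : x ∈ D (q n) := (hx (q n)).2 (hq1 n)
        calc G x ≤ (if x ∈ D (q n) then ENNReal.ofReal (Real.exp (q n)) else ⊤) := iInf_le _ _
        _ = ENNReal.ofReal (Real.exp (q n)) := by rw [if_pos hmem]
      have htend : Filter.Tendsto (fun n => ENNReal.ofReal (Real.exp ((q n : ℝ))))
          Filter.atTop (nhds (ENNReal.ofReal (Real.exp r))) :=
        (ENNReal.continuous_ofReal.tendsto _).comp ((Real.continuous_exp.tendsto _).comp hqt)
      exact ge_of_tendsto' htend hle
    · refine le_iInf fun q => ?_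
      by_cases hmem : x ∈ D q
      · rw [if_pos hmem]
        exact ENNReal.ofReal_le_ofReal (Real.exp_le_exp.2 ((hx q).1 hmem))
      · rw [if_neg hmem]; exact le_top
  rw [show (fun x => Real.log (G x).toReal) x = Real.log (G x).toReal from rfl, hGx,
    ENNReal.toReal_ofReal (Real.exp_nonneg r), Real.log_exp]

lemma expMeasure_Ioo_ne_zero {r : ℝ} (hr : 0 < r) {u v : ℝ} (hu : 0 ≤ u) (huv : u < v) :
    expMeasure r (Set.Ioo u v) ≠ 0 := by
  intro h0
  have h1 : expMeasure r (Set.Ioi u) ≤ expMeasure r (Set.Ioo u v) + expMeasure r (Set.Ici v) := by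
    refine (measure_mono ?_).trans (measure_union_le _ _)
    intro x hx
    by_cases hxv : x < v
    · exact Or.inl ⟨hx, hxv⟩
    · exact Or.inr (not_lt.mp hxv)
  have h2 : expMeasure r (Set.Ici v) = expMeasure r (Set.Ioi v) := by
    apply le_antisymm
    · calc expMeasure r (Set.Ici v) ≤ expMeasure r {v} + expMeasure r (Set.Ioi v) := by
            refine (measure_mono ?_).trans (measure_union_le _ _)
            intro x hx
            rcases eq_or_lt_of_le (Set.mem_Ici.mp hx) with h | h
            · exact Or.inl h.symm
            · exact Or.inr h
      _ = expMeasure r (Set.Ioi v) := by rw [expMeasure_singleton, zero_add]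
    · exact measure_mono Set.Ioi_subset_Ici_self
  rw [h0, zero_add, h2, expMeasure_Ioi hr, expMeasure_Ioi hr,
    max_eq_left hu, max_eq_left (hu.trans huv.le)] at h1
  have h3 := Real.exp_le_exp.mp
    ((ENNReal.ofReal_le_ofReal_iff (Real.exp_nonneg _)).mp h1)
  nlinarith

/-- Trace of `F t` on `{t < T₂}` is generated by `T₁`. -/
lemma trace_lemma {Ω : Type*} [MeasurableSpace Ω] (T₁ T₂ : Ω → ℝ)
    (N : ℝ → Ω → ℝ)
    (hN : ∀ t ω, N t ω = (if T₁ ω ≤ t then 1 else 0) + (if T₂ ω ≤ t then 1 else 0))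
    (t : ℝ) (A : Set Ω)
    (hA : MeasurableSet[⨆ s ∈ Set.Icc (0 : ℝ) t,
      MeasurableSpace.comap (N s) inferInstance] A) :
    ∃ C : Set ℝ, MeasurableSet C ∧
      A ∩ {ω | t < T₂ ω} = T₁ ⁻¹' C ∩ {ω | t < T₂ ω} := by
  classical
  set S : Set Ω := {ω | t < T₂ ω} with hS
  let m' : MeasurableSpace Ω :=
    { MeasurableSet' := fun A => ∃ C : Set ℝ, MeasurableSet C ∧ A ∩ S = T₁ ⁻¹' C ∩ S
      measurableSet_empty := ⟨∅, MeasurableSet.empty, by simp⟩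
      measurableSet_compl := by
        rintro A ⟨C, hC, hAC⟩
        refine ⟨Cᶜ, hC.compl, ?_⟩
        ext ω
        have hiff := Set.ext_iff.mp hAC ω
        by_cases hω : ω ∈ S
        · simp only [Set.mem_inter_iff, hω, and_true, Set.mem_compl_iff,
            Set.mem_preimage] at hiff ⊢
          tauto
        · simp [hω]
      measurableSet_iUnion := by
        intro f hf
        choose C hC hCeq using hf
        refine ⟨⋃ i, C i, MeasurableSet.iUnion hC, ?_⟩
        rw [Set.iUnion_inter, Set.preimage_iUnion, Set.iUnion_inter]
        exact Set.iUnion_congr hCeq }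
  have hle : (⨆ s ∈ Set.Icc (0 : ℝ) t,
      MeasurableSpace.comap (N s) inferInstance) ≤ m' := by
    refine iSup₂_le fun s hs => ?_
    rintro B ⟨C, hC, rfl⟩
    refine ⟨{x | (x ≤ s ∧ (1 : ℝ) ∈ C) ∨ (s < x ∧ (0 : ℝ) ∈ C)}, ?_, ?_⟩
    · have : {x : ℝ | (x ≤ s ∧ (1 : ℝ) ∈ C) ∨ (s < x ∧ (0 : ℝ) ∈ C)} =
          (Set.Iic s ∩ {x : ℝ | (1 : ℝ) ∈ C}) ∪ (Set.Ioi s ∩ {x : ℝ | (0 : ℝ) ∈ C}) := by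
        ext x; simp [Set.mem_Iic, Set.mem_Ioi]
      rw [this]
      exact ((measurableSet_Iic.inter (MeasurableSet.const _)).union
        (measurableSet_Ioi.inter (MeasurableSet.const _)))
    · ext ω
      have hsle : s ≤ t := hs.2
      simp only [Set.mem_inter_iff, Set.mem_preimage, Set.mem_setOf_eq, hS]
      constructor
      · rintro ⟨hB, hωS⟩
        refine ⟨?_, hωS⟩
        have hT₂ : ¬ T₂ ω ≤ s := by push_neg; linarith [hωS]
        by_cases h1 : T₁ ω ≤ s
        · left
          refine ⟨h1, ?_⟩
          have : N s ω = 1 := by rw [hN]; simp [h1, hT₂]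
          rwa [this] at hB
        · right
          refine ⟨not_le.mp h1, ?_⟩
          have : N s ω = 0 := by rw [hN]; simp [h1, hT₂]
          rwa [this] at hB
      · rintro ⟨hD, hωS⟩
        refine ⟨?_, hωS⟩
        have hT₂ : ¬ T₂ ω ≤ s := by push_neg; linarith [hωS]
        rcases hD with ⟨h1, h1C⟩ | ⟨h0, h0C⟩
        · have : N s ω = 1 := by rw [hN]; simp [h1, hT₂]
          rw [this]; exact h1C
        · have : N s ω = 0 := by rw [hN]; simp [not_le.mpr h0, hT₂]
          rw [this]; exact h0C
  exact hle A hA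

end NHAux

open NHAux

/-- For `τ = k₁T₁ + k₂T₂` (`k₁,k₂ > 0`, `k₁+k₂ = 1`, `T₁,T₂` the first two jump times
of a Poisson process with intensity `λ`): `Z̃_τ = Z_τ = e^{-λk₁(T₂-T₁)} < 1` a.s.,
`τ` avoids `F`-stopping times, and `τ` is not an honest time. -/
theorem convex_combination_not_honest {Ω : Type*} [MeasurableSpace Ω]
    (μ : Measure Ω) [IsProbabilityMeasure μ] (lam k₁ k₂ : ℝ) (hlam : 0 < lam)
    (hk₁ : 0 < k₁) (hk₂ : 0 < k₂) (hk : k₁ + k₂ = 1)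
    (T₁ T₂ : Ω → ℝ) (hT₁m : Measurable T₁) (hT₂m : Measurable T₂)
    (hpos : ∀ ω, 0 < T₁ ω ∧ T₁ ω < T₂ ω)
    (hd1 : Measure.map T₁ μ = expMeasure lam)
    (hd2 : Measure.map (fun ω => T₂ ω - T₁ ω) μ = expMeasure lam)
    (hindep : IndepFun T₁ (fun ω => T₂ ω - T₁ ω) μ)
    (N : ℝ → Ω → ℝ)
    (hN : ∀ t ω, N t ω = (if T₁ ω ≤ t then 1 else 0) + (if T₂ ω ≤ t then 1 else 0))
    (F : ℝ → MeasurableSpace Ω)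
    (hF : ∀ t, F t = ⨆ s ∈ Set.Icc (0 : ℝ) t, MeasurableSpace.comap (N s) inferInstance)
    (τ : Ω → ℝ) (hτ : ∀ ω, τ ω = k₁ * T₁ ω + k₂ * T₂ ω)
    (Z Ztilde : ℝ → Ω → ℝ)
    (hZver : ∀ t, Z t =ᵐ[μ]
      μ[Set.indicator {ω | t < τ ω} (fun _ => (1 : ℝ)) | F t])
    (hZtver : ∀ t, Ztilde t =ᵐ[μ]
      μ[Set.indicator {ω | t ≤ τ ω} (fun _ => (1 : ℝ)) | F t])
    -- regular versions: right-continuity and continuity at `τ`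
    (hregZ : ∀ᵐ ω ∂μ, ∀ t : ℝ, ContinuousWithinAt (fun s => Z s ω) (Set.Ici t) t)
    (hregZt : ∀ᵐ ω ∂μ, ∀ t : ℝ, ContinuousWithinAt (fun s => Ztilde s ω) (Set.Iic t) t)
    (hregτ : ∀ᵐ ω ∂μ, ContinuousAt (fun s => Z s ω) (τ ω) ∧
      ContinuousAt (fun s => Ztilde s ω) (τ ω)) :
    (∀ᵐ ω ∂μ, Ztilde (τ ω) ω = Z (τ ω) ω ∧
      Z (τ ω) ω = Real.exp (-lam * k₁ * (T₂ ω - T₁ ω)) ∧ Z (τ ω) ω < 1) ∧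
    (∀ T : Ω → ℝ, (∀ t : ℝ, MeasurableSet[F t] {ω | T ω ≤ t}) →
      μ {ω | τ ω = T ω} = 0) ∧
    ¬ (∀ t : ℝ, ∃ τt : Ω → ℝ,
        Measurable[F t] τt ∧ ∀ ω, τ ω < t → τ ω = τt ω) := by
  classical
  haveI hexp : IsProbabilityMeasure (expMeasure lam) := isProbabilityMeasure_expMeasure hlam
  set Y : Ω → ℝ := fun ω => T₂ ω - T₁ ω with hY
  have hYm : Measurable Y := hT₂m.sub hT₁m
  have hYpos : ∀ ω, 0 < Y ω := fun ω => sub_pos.2 (hpos ω).2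
  have hk₂1 : k₂ < 1 := by linarith
  have hτeq : ∀ ω, τ ω = T₁ ω + k₂ * Y ω := by
    intro ω
    rw [hτ ω]
    have h1 : k₁ = 1 - k₂ := by linarith
    simp only [hY]
    rw [h1]; ring
  have hτT1 : ∀ ω, T₁ ω < τ ω := by
    intro ω
    rw [hτeq ω]
    nlinarith [hYpos ω]
  have hτT2 : ∀ ω, τ ω < T₂ ω := by
    intro ω
    rw [hτeq ω]
    have := hYpos ω
    have : k₂ * Y ω < Y ω := by nlinarith
    simp only [hY] at *
    linarith
  have hτm : Measurable τ := by
    have : τ = fun ω => k₁ * T₁ ω + k₂ * T₂ ω := funext hτ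
    rw [this]
    exact (hT₁m.const_mul k₁).add (hT₂m.const_mul k₂)
  have hNm : ∀ s, Measurable (N s) := by
    intro s
    have : N s = fun ω => (if T₁ ω ≤ s then (1:ℝ) else 0) + (if T₂ ω ≤ s then (1:ℝ) else 0) :=
      funext (hN s)
    rw [this]
    exact Measurable.add
      (Measurable.ite (hT₁m measurableSet_Iic) measurable_const measurable_const)
      (Measurable.ite (hT₂m measurableSet_Iic) measurable_const measurable_const)
  have hm_le : ∀ t, F t ≤ ‹MeasurableSpace Ω› := by
    intro t
    rw [hF t]
    exact iSup₂_le fun s _ => (hNm s).comap_le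
  -- basic F t measurable sets
  have hT1F : ∀ t s : ℝ, s ≤ t → MeasurableSet[F t] {ω | T₁ ω ≤ s} := by
    intro t s hst
    rcases le_or_gt 0 s with hs0 | hs0
    · have hsub : MeasurableSpace.comap (N s) inferInstance ≤ F t := by
        rw [hF t]
        exact le_iSup₂ (f := fun (s : ℝ) (_ : s ∈ Set.Icc (0:ℝ) t) =>
          MeasurableSpace.comap (N s) inferInstance) s ⟨hs0, hst⟩
      refine hsub _ ⟨Set.Ici 1, measurableSet_Ici, ?_⟩
      ext ω
      simp only [Set.mem_preimage, Set.mem_Ici, Set.mem_setOf_eq, hN s ω]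
      constructor
      · intro h
        by_contra h1
        rw [if_neg h1, if_neg (fun h2 => h1 ((hpos ω).2.le.trans h2))] at h
        norm_num at h
      · intro h1
        rw [if_pos h1]
        have : (0:ℝ) ≤ if T₂ ω ≤ s then 1 else 0 := by split <;> norm_num
        linarith
    · have he : {ω | T₁ ω ≤ s} = ∅ := by
        ext ω
        simp only [Set.mem_setOf_eq, Set.mem_empty_iff_false, iff_false, not_le]
        linarith [(hpos ω).1]
      rw [he]
      exact @MeasurableSet.empty _ (F t)
  have hT2F : ∀ t : ℝ, MeasurableSet[F t] {ω | T₂ ω ≤ t} := by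
    intro t
    rcases le_or_gt 0 t with ht0 | ht0
    · have hsub : MeasurableSpace.comap (N t) inferInstance ≤ F t := by
        rw [hF t]
        exact le_iSup₂ (f := fun (s : ℝ) (_ : s ∈ Set.Icc (0:ℝ) t) =>
          MeasurableSpace.comap (N s) inferInstance) t ⟨ht0, le_refl t⟩
      refine hsub _ ⟨{2}, measurableSet_singleton _, ?_⟩
      ext ω
      simp only [Set.mem_preimage, Set.mem_singleton_iff, Set.mem_setOf_eq, hN t ω]
      constructor
      · intro h
        by_contra h2
        rw [if_neg h2] at h
        split at h <;> norm_num at h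
      · intro h2
        rw [if_pos ((hpos ω).2.le.trans h2), if_pos h2]
        norm_num
    · have he : {ω | T₂ ω ≤ t} = ∅ := by
        ext ω
        simp only [Set.mem_setOf_eq, Set.mem_empty_iff_false, iff_false, not_le]
        linarith [(hpos ω).1, (hpos ω).2]
      rw [he]
      exact @MeasurableSet.empty _ (F t)
  have hminF : ∀ t : ℝ, Measurable[F t] (fun ω => min (T₁ ω) t) := by
    intro t
    apply measurable_of_Iic (α := ℝ)
    intro s
    rcases le_or_gt t s with hts | hts
    · have he : (fun ω => min (T₁ ω) t) ⁻¹' Set.Iic s = Set.univ := by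
        ext ω
        simp only [Set.mem_preimage, Set.mem_Iic, Set.mem_univ, iff_true, min_le_iff]
        right; exact hts
      rw [he]
      exact @MeasurableSet.univ _ (F t)
    · have he : (fun ω => min (T₁ ω) t) ⁻¹' Set.Iic s = {ω | T₁ ω ≤ s} := by
        ext ω
        simp only [Set.mem_preimage, Set.mem_Iic, Set.mem_setOf_eq, min_le_iff]
        constructor
        · rintro (h | h)
          · exact h
          · linarith
        · exact fun h => Or.inl h
      rw [he]
      exact hT1F t s hts.le
  -- the candidate for Z_t
  set c : ℝ := lam * (k₁ / k₂) with hc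
  have hc0 : 0 ≤ c := by positivity
  set gZ : ℝ → Ω → ℝ := fun t ω =>
    (if T₂ ω ≤ t then 0 else 1) * Real.exp (-c * (t - min (T₁ ω) t)) with hgZdef
  have hgZF : ∀ t, Measurable[F t] (gZ t) := by
    intro t
    apply Measurable.mul
    · exact Measurable.ite (hT2F t) measurable_const measurable_const
    · exact Real.continuous_exp.measurable.comp
        ((measurable_const.sub (hminF t)).const_mul (-c))
  have hgZm : ∀ t, Measurable (gZ t) := fun t => (hgZF t).mono (hm_le t) le_rfl
  have hgZ_nonneg : ∀ t ω, 0 ≤ gZ t ω := by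
    intro t ω
    apply mul_nonneg
    · split <;> norm_num
    · exact (Real.exp_pos _).le
  have hgZ_le_one : ∀ t ω, gZ t ω ≤ 1 := by
    intro t ω
    simp only [hgZdef]
    by_cases h2 : T₂ ω ≤ t
    · rw [if_pos h2]; norm_num
    · rw [if_neg h2, one_mul]
      apply Real.exp_le_one_iff.2
      have hmin : min (T₁ ω) t ≤ t := min_le_right _ _
      nlinarith
  have hmap : Measure.map (fun ω => (T₁ ω, Y ω)) μ
      = (expMeasure lam).prod (expMeasure lam) := by
    have h := (indepFun_iff_map_prod_eq_prod_map_map hT₁m.aemeasurable hYm.aemeasurable).mp hindep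
    rw [hd1, hd2] at h
    exact h
  have hT12 : ∀ ω, T₁ ω + Y ω = T₂ ω := fun ω => by simp [hY]
  have hkey : ∀ t : ℝ,
      gZ t =ᵐ[μ] μ[Set.indicator {ω | t < τ ω} (fun _ => (1 : ℝ)) | F t] := by
    intro t
    haveI : SigmaFinite (μ.trim (hm_le t)) := inferInstance
    have hτset : MeasurableSet {ω | t < τ ω} := measurableSet_lt measurable_const hτm
    have hgZint : Integrable (gZ t) μ := by
      refine Integrable.mono' (integrable_const (1:ℝ)) (hgZm t).aestronglyMeasurable
        (Filter.Eventually.of_forall fun ω => ?_)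
      rw [Real.norm_eq_abs, abs_of_nonneg (hgZ_nonneg t ω)]
      exact hgZ_le_one t ω
    refine ae_eq_condExp_of_forall_setIntegral_eq (hm_le t)
      ((integrable_const (1:ℝ)).indicator hτset)
      (fun A hA _ => hgZint.integrableOn) ?_
      (StronglyMeasurable.aestronglyMeasurable
        (by exact Measurable.stronglyMeasurable (hgZF t) :
          StronglyMeasurable[F t] (gZ t)))
    intro A hA _
    have hA' : MeasurableSet[⨆ s ∈ Set.Icc (0 : ℝ) t,
        MeasurableSpace.comap (N s) inferInstance] A := by rw [← hF t]; exact hA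
    obtain ⟨C, hC, hAC⟩ := trace_lemma T₁ T₂ N hN t A hA'
    have hAm : MeasurableSet A := hm_le t A hA
    have hCm : MeasurableSet (T₁ ⁻¹' C) := hT₁m hC
    set S : Set Ω := {ω | t < T₂ ω} with hSdef
    set f₁ : Ω → ℝ := Set.indicator {ω | t < τ ω} (fun _ => (1 : ℝ)) with hf₁def
    -- both integrands vanish off S
    have hgZ0 : ∀ ω, ω ∉ S → gZ t ω = 0 := by
      intro ω hω
      simp only [hgZdef]
      rw [if_pos (not_lt.mp hω), zero_mul]
    have hf₁0 : ∀ ω, ω ∉ S → f₁ ω = 0 := by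
      intro ω hω
      apply Set.indicator_of_notMem
      intro hmem
      exact hω (lt_trans hmem (hτT2 ω))
    -- indicator equality for shifting the set of integration
    have hind : ∀ (f : Ω → ℝ), (∀ ω, ω ∉ S → f ω = 0) →
        ∀ ω, A.indicator f ω = (T₁ ⁻¹' C).indicator f ω := by
      intro f hf ω
      by_cases hωS : ω ∈ S
      · have hiff := Set.ext_iff.mp hAC ω
        simp only [Set.mem_inter_iff, hωS, and_true] at hiff
        by_cases hωA : ω ∈ A
        · rw [Set.indicator_of_mem hωA, Set.indicator_of_mem (hiff.mp hωA)]
        · rw [Set.indicator_of_notMem hωA,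
            Set.indicator_of_notMem (fun hmem => hωA (hiff.mpr hmem))]
      · by_cases hωA : ω ∈ A <;> by_cases hωC : ω ∈ T₁ ⁻¹' C <;>
          simp [Set.indicator_apply, hωA, hωC, hf ω hωS]
    have hshift : ∀ (f : Ω → ℝ), (∀ ω, ω ∉ S → f ω = 0) → Integrable f μ →
        ∫ x in A, f x ∂μ = ∫ x in T₁ ⁻¹' C, f x ∂μ := by
      intro f hf hfi
      rw [← integral_indicator hAm, ← integral_indicator hCm]
      exact integral_congr_ae (Filter.Eventually.of_forall (hind f hf))
    rw [hshift _ hgZ0 hgZint, hshift _ hf₁0 ((integrable_const (1:ℝ)).indicator hτset)]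
    -- now compute both integrals via the product measure
    have hnn₁ : 0 ≤ᵐ[μ.restrict (T₁ ⁻¹' C)] f₁ :=
      Filter.Eventually.of_forall fun ω => Set.indicator_nonneg (fun _ _ => zero_le_one) ω
    have hnn₂ : 0 ≤ᵐ[μ.restrict (T₁ ⁻¹' C)] gZ t :=
      Filter.Eventually.of_forall fun ω => hgZ_nonneg t ω
    have hf₁m : Measurable f₁ := (measurable_const.indicator hτset)
    rw [integral_eq_lintegral_of_nonneg_ae hnn₂ ((hgZm t).aestronglyMeasurable.restrict),
      integral_eq_lintegral_of_nonneg_ae hnn₁ (hf₁m.aestronglyMeasurable.restrict)]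
    congr 1
    -- lintegral identity
    set ν : Measure ℝ := expMeasure lam with hν
    set Φ₁ : ℝ × ℝ → ℝ≥0∞ := fun p =>
      Set.indicator C (fun _ => (1:ℝ≥0∞)) p.1 * (if p.1 + k₂ * p.2 ≤ t then 0 else 1)
      with hΦ₁
    set Φ₂ : ℝ × ℝ → ℝ≥0∞ := fun p =>
      Set.indicator C (fun _ => (1:ℝ≥0∞)) p.1 *
        ((if p.1 + p.2 ≤ t then 0 else 1) * ENNReal.ofReal (Real.exp (-c * (t - min p.1 t))))
      with hΦ₂
    have hΦ₁m : Measurable Φ₁ := by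
      apply Measurable.mul
      · exact (measurable_const.indicator hC).comp measurable_fst
      · exact Measurable.ite
          (measurableSet_le (measurable_fst.add (measurable_snd.const_mul k₂)) measurable_const)
          measurable_const measurable_const
    have hΦ₂m : Measurable Φ₂ := by
      apply Measurable.mul
      · exact (measurable_const.indicator hC).comp measurable_fst
      · apply Measurable.mul
        · exact Measurable.ite
            (measurableSet_le (measurable_fst.add measurable_snd) measurable_const)
            measurable_const measurable_const
        · exact ENNReal.measurable_ofReal.comp
            (Real.measurable_exp.comp
              ((measurable_const.sub (measurable_fst.min measurable_const)).const_mul (-c)))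
    have hptw₂ : ∀ ω, (T₁ ⁻¹' C).indicator (fun x => ENNReal.ofReal (gZ t x)) ω
        = Φ₂ (T₁ ω, Y ω) := by
      intro ω
      by_cases hωC : T₁ ω ∈ C
      · rw [Set.indicator_of_mem (show ω ∈ T₁ ⁻¹' C from hωC), hΦ₂]
        simp only [Set.indicator_of_mem hωC, one_mul, hT12 ω]
        simp only [hgZdef]
        by_cases h2 : T₂ ω ≤ t
        · rw [if_pos h2, if_pos h2, zero_mul, zero_mul, ENNReal.ofReal_zero]
        · rw [if_neg h2, if_neg h2, one_mul, one_mul]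
      · rw [Set.indicator_of_notMem (show ω ∉ T₁ ⁻¹' C from hωC), hΦ₂]
        simp [Set.indicator_of_notMem hωC]
    have hptw₁ : ∀ ω, (T₁ ⁻¹' C).indicator (fun x => ENNReal.ofReal (f₁ x)) ω
        = Φ₁ (T₁ ω, Y ω) := by
      intro ω
      by_cases hωC : T₁ ω ∈ C
      · rw [Set.indicator_of_mem (show ω ∈ T₁ ⁻¹' C from hωC), hΦ₁]
        simp only [Set.indicator_of_mem hωC, one_mul]
        simp only [hf₁def]
        have hτw : τ ω = T₁ ω + k₂ * Y ω := hτeq ω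
        by_cases hlt : t < τ ω
        · rw [Set.indicator_of_mem (show ω ∈ {ω | t < τ ω} from hlt), if_neg (by rw [← hτw]; exact not_le.mpr hlt)]
          simp
        · rw [Set.indicator_of_notMem (show ω ∉ {ω | t < τ ω} from hlt), if_pos (by rw [← hτw]; exact not_lt.mp hlt)]
          simp
      · rw [Set.indicator_of_notMem (show ω ∉ T₁ ⁻¹' C from hωC), hΦ₁]
        simp [Set.indicator_of_notMem hωC]
    have hWm : Measurable (fun ω => (T₁ ω, Y ω)) := hT₁m.prodMk hYm
    have hl₂ : ∫⁻ x in T₁ ⁻¹' C, ENNReal.ofReal (gZ t x) ∂μ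
        = ∫⁻ p, Φ₂ p ∂(ν.prod ν) := by
      rw [← lintegral_indicator hCm, lintegral_congr hptw₂, ← lintegral_map hΦ₂m hWm, hmap]
    have hl₁ : ∫⁻ x in T₁ ⁻¹' C, ENNReal.ofReal (f₁ x) ∂μ
        = ∫⁻ p, Φ₁ p ∂(ν.prod ν) := by
      rw [← lintegral_indicator hCm, lintegral_congr hptw₁, ← lintegral_map hΦ₁m hWm, hmap]
    rw [hl₁, hl₂]
    haveI : SFinite ν := by rw [hν]; infer_instance
    rw [lintegral_prod _ hΦ₁m.aemeasurable, lintegral_prod _ hΦ₂m.aemeasurable]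
    refine lintegral_congr fun x => ?_
    by_cases hxC : x ∈ C
    · simp only [hΦ₁, hΦ₂, Set.indicator_of_mem hxC, one_mul]
      -- LHS = ν (Ioi ((t-x)/k₂)), RHS = K * ν (Ioi (t-x))
      have l1 : (fun y => (if x + k₂ * y ≤ t then (0:ℝ≥0∞) else 1))
          = Set.indicator (Set.Ioi ((t - x)/k₂)) (fun _ => (1:ℝ≥0∞)) := by
        funext y
        by_cases h : x + k₂ * y ≤ t
        · rw [if_pos h, Set.indicator_of_notMem]
          simp only [Set.mem_Ioi, not_lt]
          rw [le_div_iff₀ hk₂]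
          nlinarith
        · rw [if_neg h, Set.indicator_of_mem]
          simp only [Set.mem_Ioi]
          rw [div_lt_iff₀ hk₂]
          push_neg at h
          nlinarith
      have l2 : (fun y => (if x + y ≤ t then (0:ℝ≥0∞) else 1)
            * ENNReal.ofReal (Real.exp (-c * (t - min x t))))
          = Set.indicator (Set.Ioi (t - x))
              (fun _ => ENNReal.ofReal (Real.exp (-c * (t - min x t)))) := by
        funext y
        by_cases h : x + y ≤ t
        · rw [if_pos h, zero_mul, Set.indicator_of_notMem]
          simp only [Set.mem_Ioi, not_lt]
          linarith
        · rw [if_neg h, one_mul, Set.indicator_of_mem]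
          simp only [Set.mem_Ioi]
          push_neg at h
          linarith
      rw [l1, l2, lintegral_indicator measurableSet_Ioi, lintegral_indicator measurableSet_Ioi,
        setLIntegral_const, setLIntegral_const, one_mul]
      rw [hν, expMeasure_Ioi hlam, expMeasure_Ioi hlam]
      rcases lt_or_ge x t with hxt | hxt
      · have h1 : max ((t - x)/k₂) 0 = (t - x)/k₂ :=
          max_eq_left (div_nonneg (by linarith) hk₂.le)
        have h2 : max (t - x) 0 = t - x := max_eq_left (by linarith)
        have h3 : min x t = x := min_eq_left hxt.le
        rw [h1, h2, h3, ← ENNReal.ofReal_mul (Real.exp_nonneg _), ← Real.exp_add]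
        congr 2
        have hk₁' : k₁ = 1 - k₂ := by linarith
        rw [hc, hk₁']
        field_simp
        ring
      · have h1 : max ((t - x)/k₂) 0 = 0 :=
          max_eq_right (div_nonpos_of_nonpos_of_nonneg (by linarith) hk₂.le)
        have h2 : max (t - x) 0 = 0 := max_eq_right (by linarith)
        have h3 : min x t = t := min_eq_right hxt
        rw [h1, h2, h3, sub_self, mul_zero, Real.exp_zero, ENNReal.ofReal_one, one_mul]
    · simp only [hΦ₁, hΦ₂, Set.indicator_of_notMem hxC, zero_mul, lintegral_zero]
  have hatom : ∀ t : ℝ, μ {ω | τ ω = t} = 0 := by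
    intro t
    have hset : {ω | τ ω = t} = {ω | Y ω = (fun x => (t - x)/k₂) (T₁ ω)} := by
      ext ω
      simp only [Set.mem_setOf_eq, hτeq ω]
      constructor
      · intro h
        field_simp
        linarith
      · intro h
        have h2 : k₂ * Y ω = t - T₁ ω := by
          rw [h]
          field_simp
        linarith
    rw [hset]
    exact graph_null μ hlam T₁ Y hT₁m hYm hd2 hindep _
      ((measurable_const.sub measurable_id).div_const k₂)
  have hZeq : ∀ t : ℝ, Z t =ᵐ[μ] gZ t := fun t => (hZver t).trans (hkey t).symm
  have hZteq : ∀ t : ℝ, Ztilde t =ᵐ[μ] gZ t := by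
    intro t
    refine (hZtver t).trans (Filter.EventuallyEq.trans ?_ (hkey t).symm)
    apply condExp_congr_ae
    have hne : ∀ᵐ ω ∂μ, τ ω ≠ t := by
      rw [ae_iff]
      convert hatom t using 2
      ext ω
      simp
    filter_upwards [hne] with ω hω
    by_cases hlt : t < τ ω
    · rw [Set.indicator_of_mem (show ω ∈ {ω | t ≤ τ ω} from hlt.le),
        Set.indicator_of_mem (show ω ∈ {ω | t < τ ω} from hlt)]
    · have h1 : ¬ t ≤ τ ω := fun hle => hω (le_antisymm (not_lt.mp hlt) hle)
      rw [Set.indicator_of_notMem (show ω ∉ {ω | t ≤ τ ω} from h1),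
        Set.indicator_of_notMem (show ω ∉ {ω | t < τ ω} from hlt)]
  refine ⟨?_, ?_, ?_⟩
  · -- Part 1
    have hq : ∀ᵐ ω ∂μ, ∀ q : ℚ, Z (q:ℝ) ω = gZ (q:ℝ) ω ∧ Ztilde (q:ℝ) ω = gZ (q:ℝ) ω := by
      rw [ae_all_iff]
      intro q
      filter_upwards [hZeq (q:ℝ), hZteq (q:ℝ)] with ω h1 h2 using ⟨h1, h2⟩
    filter_upwards [hq, hregτ] with ω hqω hcont
    have hT1x : T₁ ω < τ ω := hτT1 ω
    have hxT2 : τ ω < T₂ ω := hτT2 ω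
    have hgc : ContinuousAt (fun s => gZ s ω) (τ ω) := by
      have hbase : ContinuousAt (fun s => Real.exp (-c * (s - T₁ ω))) (τ ω) :=
        (Real.continuous_exp.comp
          (continuous_const.mul (continuous_id.sub continuous_const))).continuousAt
      have hev : ∀ᶠ s in nhds (τ ω), s ∈ Set.Ioo (T₁ ω) (T₂ ω) :=
        Filter.eventually_of_mem (isOpen_Ioo.mem_nhds ⟨hT1x, hxT2⟩) (fun s hs => hs)
      have heq : (fun s => Real.exp (-c * (s - T₁ ω))) =ᶠ[nhds (τ ω)] (fun s => gZ s ω) := by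
        filter_upwards [hev] with s hs
        simp only [hgZdef]
        rw [if_neg (not_le.mpr hs.2), one_mul, min_eq_left hs.1.le]
      exact hbase.congr heq
    haveI hne : (nhdsWithin (τ ω) (Set.range ((↑) : ℚ → ℝ))).NeBot :=
      Rat.denseRange_cast.nhdsWithin_neBot (τ ω)
    have heq' : ∀ᶠ s in nhdsWithin (τ ω) (Set.range ((↑) : ℚ → ℝ)), Z s ω = gZ s ω :=
      eventually_nhdsWithin_of_forall (fun s hs => by
        obtain ⟨q, rfl⟩ := hs
        exact (hqω q).1)
    have heqt' : ∀ᶠ s in nhdsWithin (τ ω) (Set.range ((↑) : ℚ → ℝ)), Ztilde s ω = gZ s ω :=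
      eventually_nhdsWithin_of_forall (fun s hs => by
        obtain ⟨q, rfl⟩ := hs
        exact (hqω q).2)
    have htg : Filter.Tendsto (fun s => gZ s ω)
        (nhdsWithin (τ ω) (Set.range ((↑) : ℚ → ℝ))) (nhds (gZ (τ ω) ω)) :=
      hgc.tendsto.mono_left nhdsWithin_le_nhds
    have hZx : Z (τ ω) ω = gZ (τ ω) ω := by
      refine tendsto_nhds_unique ?_ htg
      exact Filter.Tendsto.congr' heq'
        ((hcont.1.tendsto).mono_left nhdsWithin_le_nhds)
    have hZtx : Ztilde (τ ω) ω = gZ (τ ω) ω := by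
      refine tendsto_nhds_unique ?_ htg
      exact Filter.Tendsto.congr' heqt'
        ((hcont.2.tendsto).mono_left nhdsWithin_le_nhds)
    have hval : gZ (τ ω) ω = Real.exp (-lam * k₁ * (T₂ ω - T₁ ω)) := by
      simp only [hgZdef]
      rw [if_neg (not_le.mpr hxT2), one_mul, min_eq_left hT1x.le]
      congr 1
      have hd : τ ω - T₁ ω = k₂ * (T₂ ω - T₁ ω) := by
        rw [hτeq ω]
        simp only [hY]
        ring
      rw [hd, hc]
      field_simp
    refine ⟨by rw [hZtx, hZx], by rw [hZx, hval], ?_⟩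
    rw [hZx, hval, ← Real.exp_zero]
    apply Real.exp_lt_exp.2
    nlinarith [mul_pos (mul_pos hlam hk₁) (sub_pos.2 (hpos ω).2)]
  · -- Part 2: τ avoids stopping times
    intro T hT
    have hC : ∀ q : ℚ, ∃ C : Set ℝ, MeasurableSet C ∧
        {ω | T ω ≤ (q:ℝ)} ∩ {ω | (q:ℝ) < T₂ ω} = T₁ ⁻¹' C ∩ {ω | (q:ℝ) < T₂ ω} :=
      fun q => trace_lemma T₁ T₂ N hN (q:ℝ) _ (by rw [← hF (q:ℝ)]; exact hT (q:ℝ))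
    choose C hCmeas hCeq using hC
    set D : ℚ → Set ℝ := fun q => ⋃ (q' : ℚ) (_ : q' ≤ q), C q' with hD
    have hDm : ∀ q, MeasurableSet (D q) :=
      fun q => MeasurableSet.iUnion fun q' => MeasurableSet.iUnion fun _ => hCmeas q'
    obtain ⟨g, hgm, hgspec⟩ := exists_g D hDm
    have hsub : {ω | τ ω = T ω} ⊆ {ω | Y ω = (fun x => (g x - x)/k₂) (T₁ ω)} := by
      intro ω hω
      simp only [Set.mem_setOf_eq] at hω ⊢
      have hTlt : T ω < T₂ ω := hω ▸ hτT2 ω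
      have hgT : g (T₁ ω) = T ω := by
        apply hgspec
        intro q
        constructor
        · intro hmem
          simp only [hD, Set.mem_iUnion] at hmem
          obtain ⟨q', hq', hmem⟩ := hmem
          have hq'q : (q' : ℝ) ≤ (q : ℝ) := by exact_mod_cast hq'
          rcases lt_or_ge (q' : ℝ) (T₂ ω) with h | h
          · have hmem2 : ω ∈ {ω | T ω ≤ (q':ℝ)} ∩ {ω | (q':ℝ) < T₂ ω} := by
              rw [hCeq q']
              exact ⟨hmem, h⟩
            exact le_trans hmem2.1 hq'q
          · exact le_trans (hTlt.le.trans h) hq'q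
        · intro hle
          rcases lt_or_ge (q : ℝ) (T₂ ω) with h | h
          · have hmem2 : ω ∈ T₁ ⁻¹' C q ∩ {ω | (q:ℝ) < T₂ ω} := by
              rw [← hCeq q]
              exact ⟨hle, h⟩
            simp only [hD, Set.mem_iUnion]
            exact ⟨q, le_refl q, hmem2.1⟩
          · obtain ⟨q', hq'1, hq'2⟩ := exists_rat_btwn hTlt
            have hq'le : q' ≤ q := by
              have : (q' : ℝ) ≤ (q : ℝ) := le_trans hq'2.le h
              exact_mod_cast this
            have hmem2 : ω ∈ T₁ ⁻¹' C q' ∩ {ω | (q':ℝ) < T₂ ω} := by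
              rw [← hCeq q']
              exact ⟨hq'1.le, hq'2⟩
            simp only [hD, Set.mem_iUnion]
            exact ⟨q', hq'le, hmem2.1⟩
      rw [hgT, ← hω, hτeq ω]
      have harith : T₁ ω + k₂ * Y ω - T₁ ω = k₂ * Y ω := by ring
      rw [harith, mul_div_cancel_left₀ _ (ne_of_gt hk₂)]
    exact measure_mono_null hsub (graph_null μ hlam T₁ Y hT₁m hYm hd2 hindep _
      ((hgm.sub measurable_id).div_const k₂))
  · -- Part 3: not honest
    intro hcon
    obtain ⟨τt, hτtm, hτteq⟩ := hcon 1
    have hC : ∀ q : ℚ, ∃ C : Set ℝ, MeasurableSet C ∧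
        {ω | τt ω ≤ (q:ℝ)} ∩ {ω | (1:ℝ) < T₂ ω} = T₁ ⁻¹' C ∩ {ω | (1:ℝ) < T₂ ω} :=
      fun q => trace_lemma T₁ T₂ N hN 1 _
        (by rw [← hF 1]; exact hτtm measurableSet_Iic)
    choose C hCmeas hCeq using hC
    set D : ℚ → Set ℝ := fun q => ⋃ (q' : ℚ) (_ : q' ≤ q), C q' with hD
    have hDm : ∀ q, MeasurableSet (D q) :=
      fun q => MeasurableSet.iUnion fun q' => MeasurableSet.iUnion fun _ => hCmeas q'
    obtain ⟨g, hgm, hgspec⟩ := exists_g D hDm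
    have hkey3 : ∀ ω, 1 < T₂ ω → τt ω = g (T₁ ω) := by
      intro ω hω2
      refine (hgspec (T₁ ω) (τt ω) ?_).symm
      intro q
      constructor
      · intro hmem
        simp only [hD, Set.mem_iUnion] at hmem
        obtain ⟨q', hq', hmem⟩ := hmem
        have hq'q : (q' : ℝ) ≤ (q : ℝ) := by exact_mod_cast hq'
        have hmem2 : ω ∈ {ω | τt ω ≤ (q':ℝ)} ∩ {ω | (1:ℝ) < T₂ ω} := by
          rw [hCeq q']
          exact ⟨hmem, hω2⟩
        exact le_trans hmem2.1 hq'q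
      · intro hle
        have hmem2 : ω ∈ T₁ ⁻¹' C q ∩ {ω | (1:ℝ) < T₂ ω} := by
          rw [← hCeq q]
          exact ⟨hle, hω2⟩
        simp only [hD, Set.mem_iUnion]
        exact ⟨q, le_refl q, hmem2.1⟩
    set b : ℝ := (3 - k₂)/4 with hb
    set y1 : ℝ := (1 + k₂)/(4*k₂) with hy1
    have hab : (1/2 : ℝ) < b := by rw [hb]; linarith
    have hay : (1/2 : ℝ) < y1 := by
      rw [hy1, lt_div_iff₀ (by positivity)]
      nlinarith
    have hk2y1 : k₂ * y1 = (1 + k₂)/4 := by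
      rw [hy1]
      field_simp
    have hE : {ω | T₁ ω ∈ Set.Ioo (1/2 : ℝ) b} ∩ {ω | Y ω ∈ Set.Ioo (1/2 : ℝ) y1}
        ⊆ {ω | Y ω = (fun x => (g x - x)/k₂) (T₁ ω)} := by
      rintro ω ⟨h1, h2⟩
      simp only [Set.mem_setOf_eq, Set.mem_Ioo] at h1 h2 ⊢
      have hYω : Y ω = T₂ ω - T₁ ω := by rw [hY]
      have h2a : (1/2 : ℝ) < T₂ ω - T₁ ω := by rw [← hYω]; exact h2.1
      have h2b : T₂ ω - T₁ ω < y1 := by rw [← hYω]; exact h2.2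
      have hbb : b = (3 - k₂)/4 := hb
      have hT2 : 1 < T₂ ω := by linarith [h1.1]
      have hτ1 : τ ω < 1 := by
        rw [hτeq ω, hYω]
        have hky : k₂ * (T₂ ω - T₁ ω) < k₂ * y1 := mul_lt_mul_of_pos_left h2b hk₂
        rw [hk2y1] at hky
        linarith [h1.2]
      have heq1 : τ ω = τt ω := hτteq ω hτ1
      have heq2 : τt ω = g (T₁ ω) := hkey3 ω hT2
      have : T₁ ω + k₂ * Y ω = g (T₁ ω) := by rw [← hτeq ω, heq1, heq2]
      rw [← this]
      have harith : T₁ ω + k₂ * Y ω - T₁ ω = k₂ * Y ω := by ring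
      rw [harith, mul_div_cancel_left₀ _ (ne_of_gt hk₂)]
    have hnull : μ ({ω | T₁ ω ∈ Set.Ioo (1/2 : ℝ) b} ∩ {ω | Y ω ∈ Set.Ioo (1/2 : ℝ) y1}) = 0 :=
      measure_mono_null hE (graph_null μ hlam T₁ Y hT₁m hYm hd2 hindep _
        ((hgm.sub measurable_id).div_const k₂))
    have hprod : μ ({ω | T₁ ω ∈ Set.Ioo (1/2 : ℝ) b} ∩ {ω | Y ω ∈ Set.Ioo (1/2 : ℝ) y1})
        = μ (T₁ ⁻¹' Set.Ioo (1/2 : ℝ) b) * μ (Y ⁻¹' Set.Ioo (1/2 : ℝ) y1) := by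
      exact (indepFun_iff_measure_inter_preimage_eq_mul.mp hindep) _ _
        measurableSet_Ioo measurableSet_Ioo
    have hpos1 : μ (T₁ ⁻¹' Set.Ioo (1/2 : ℝ) b) ≠ 0 := by
      rw [← Measure.map_apply hT₁m measurableSet_Ioo, hd1]
      exact expMeasure_Ioo_ne_zero hlam (by norm_num) hab
    have hpos2 : μ (Y ⁻¹' Set.Ioo (1/2 : ℝ) y1) ≠ 0 := by
      rw [← Measure.map_apply hYm measurableSet_Ioo, hd2]
      exact expMeasure_Ioo_ne_zero hlam (by norm_num) hay
    rw [hprod] at hnull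
    exact (mul_ne_zero hpos1 hpos2) hnull
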